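/- Let k ≥ 1 be an integer, p ∈ [1,2], a ≥ 0, and ε ≥ 0. Then the set Č := {x ∈ ℝ^k : there exist j ∈ {1,…,k} and s ∈ {−1,1} with ⟨x − a s e_j⟩_p ≤ ε} (where e_j is the j-th standard basis vector) is a Schur²-concave set. -/

import Mathlib

open MeasureTheory ProbabilityTheory Filter
open scoped ENNReal

noncomputable section

/-- The standard Gaussian measure on `ℝ^k` (the `k`-fold product of `N(0,1)`). -/
def stdGaussianPi (k : ℕ) : MeasureTheory.Measure (Fin k → ℝ) :=
  MeasureTheory.Measure.pi fun _ => ProbabilityTheory.gaussianReal 0 1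

/-- `a` majorizes `b`: the total sums agree and, for every `j`, the sum of the `j`
largest entries of `a` is at least the sum of the `j` largest entries of `b`
(formulated equivalently: every sum of entries of `b` over an index set is dominated by
a sum of entries of `a` over an index set of the same cardinality). -/
def Majorizes {k : ℕ} (a b : Fin k → ℝ) : Prop :=
  (∑ i, a i = ∑ i, b i) ∧
  ∀ s : Finset (Fin k), ∃ t : Finset (Fin k),
    t.card = s.card ∧ ∑ i ∈ s, b i ≤ ∑ i ∈ t, a i

/-- The coordinatewise square `x² = (x₁², …, x_k²)` of a vector. -/
def sqv {k : ℕ} (x : Fin k → ℝ) : Fin k → ℝ := fun i => (x i) ^ 2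

/-- `f` is Schur²-concave: `f x ≤ f y` whenever `x²` majorizes `y²`. -/
def Schur2Concave {k : ℕ} {α : Type*} [Preorder α] (f : (Fin k → ℝ) → α) : Prop :=
  ∀ x y : Fin k → ℝ, Majorizes (sqv x) (sqv y) → f x ≤ f y

/-- `f` is Schur²-convex: `f x ≥ f y` whenever `x²` majorizes `y²`. -/
def Schur2Convex {k : ℕ} {α : Type*} [Preorder α] (f : (Fin k → ℝ) → α) : Prop :=
  ∀ x y : Fin k → ℝ, Majorizes (sqv x) (sqv y) → f y ≤ f x

/-- A set `A` is Schur²-convex if `x ∈ A` and `y² ⪯ x²` imply `y ∈ A`. -/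
def Schur2ConvexSet {k : ℕ} (A : Set (Fin k → ℝ)) : Prop :=
  ∀ x y : Fin k → ℝ, x ∈ A → Majorizes (sqv x) (sqv y) → y ∈ A

/-- A set `A` is Schur²-concave if `x ∈ A` and `y² ⪰ x²` imply `y ∈ A`. -/
def Schur2ConcaveSet {k : ℕ} (A : Set (Fin k → ℝ)) : Prop :=
  ∀ x y : Fin k → ℝ, x ∈ A → Majorizes (sqv y) (sqv x) → y ∈ A

open Classical in
/-- The `p`-mean `⟨x⟩_p` for `p ∈ [-∞, ∞]` (coded as `p : EReal`):
`⟨x⟩_p = ((1/k) ∑ |x_j|^p)^(1/p)` for real `p ≠ 0`, with `⟨x⟩_p := 0` when `p < 0` and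
some `x_j = 0`; `⟨x⟩_0 = ∏ |x_j|^(1/k)`; `⟨x⟩_∞ = max |x_j|`; `⟨x⟩_{-∞} = min |x_j|`. -/
noncomputable def pMean {k : ℕ} (p : EReal) (x : Fin k → ℝ) : ℝ :=
  if p = ⊤ then ⨆ j, |x j|
  else if p = ⊥ then ⨅ j, |x j|
  else if p = 0 then ∏ j, |x j| ^ ((k : ℝ)⁻¹)
  else if p.toReal < 0 ∧ ∃ j, x j = 0 then 0
  else ((k : ℝ)⁻¹ * ∑ j, |x j| ^ p.toReal) ^ (p.toReal)⁻¹

section MyAux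
open Set

lemma myaux_hmul {α : ℝ} : ∀ s : ℝ, 0 < s → s * s ^ (α - 2) = s ^ (α - 1) := by
  intro s hs
  rw [show α - 1 = 1 + (α - 2) by ring, Real.rpow_add hs, Real.rpow_one]

lemma myaux_min_integrableOn {α : ℝ} (hα0 : 0 < α) (hα1 : α < 1) {t : ℝ} (ht : 0 ≤ t) :
    IntegrableOn (fun s : ℝ => min t s * s ^ (α - 2)) (Ioi (0:ℝ)) := by
  rcases eq_or_lt_of_le ht with rfl | ht
  · exact (integrableOn_zero).congr_fun
      (fun s hs => by simp [min_eq_left (le_of_lt (Set.mem_Ioi.mp hs))]) measurableSet_Ioi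
  · rw [← Ioc_union_Ioi_eq_Ioi ht.le]
    apply IntegrableOn.union
    · have h1 : IntegrableOn (fun s : ℝ => s ^ (α - 1)) (Ioc 0 t) := by
        have := intervalIntegral.intervalIntegrable_rpow' (a := 0) (b := t) (r := α - 1) (by linarith)
        rwa [intervalIntegrable_iff_integrableOn_Ioc_of_le ht.le] at this
      exact h1.congr_fun (fun s hs => by
        rw [min_eq_right hs.2, myaux_hmul s hs.1]) measurableSet_Ioc
    · have h2 : IntegrableOn (fun s : ℝ => t * s ^ (α - 2)) (Ioi t) :=
        (integrableOn_Ioi_rpow_of_lt (by linarith) ht).const_mul t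
      exact h2.congr_fun (fun s hs => by
        rw [min_eq_left (le_of_lt hs)]) measurableSet_Ioi

lemma myaux_min_integral {α : ℝ} (hα0 : 0 < α) (hα1 : α < 1) {t : ℝ} (ht : 0 ≤ t) :
    ∫ s in Ioi (0:ℝ), min t s * s ^ (α - 2) = (1/α + 1/(1-α)) * t ^ α := by
  rcases eq_or_lt_of_le ht with rfl | ht
  · rw [Real.zero_rpow hα0.ne', mul_zero]
    rw [setIntegral_congr_fun (g := fun _ => (0:ℝ)) measurableSet_Ioi
      (fun s hs => by simp [min_eq_left (le_of_lt (Set.mem_Ioi.mp hs))])]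
    simp
  · have hint := myaux_min_integrableOn hα0 hα1 ht.le (t := t)
    rw [← Ioc_union_Ioi_eq_Ioi ht.le] at hint ⊢
    have hd : Disjoint (Ioc (0:ℝ) t) (Ioi t) := by
      rw [Set.disjoint_left]; intro s hs hs'
      exact absurd hs.2 (not_le.mpr hs')
    have hA : IntegrableOn (fun s : ℝ => min t s * s ^ (α - 2)) (Ioc 0 t) :=
      hint.mono_set Set.subset_union_left
    have hB : IntegrableOn (fun s : ℝ => min t s * s ^ (α - 2)) (Ioi t) :=
      hint.mono_set Set.subset_union_right
    rw [setIntegral_union hd measurableSet_Ioi hA hB]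
    have e1 : ∫ s in Ioc (0:ℝ) t, min t s * s ^ (α - 2) = t ^ α / α := by
      rw [setIntegral_congr_fun measurableSet_Ioc
        (g := fun s : ℝ => s ^ (α - 1))
        (fun s hs => by rw [min_eq_right hs.2, myaux_hmul s hs.1])]
      rw [← intervalIntegral.integral_of_le ht.le]
      rw [integral_rpow (Or.inl (by linarith))]
      rw [show α - 1 + 1 = α by ring, Real.zero_rpow hα0.ne']
      ring
    have e2 : ∫ s in Ioi t, min t s * s ^ (α - 2) = t ^ α / (1 - α) := by
      rw [setIntegral_congr_fun measurableSet_Ioi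
        (g := fun s : ℝ => t * s ^ (α - 2))
        (fun s hs => by rw [min_eq_left (le_of_lt hs)])]
      rw [integral_const_mul, integral_Ioi_rpow_of_lt (by linarith) ht]
      rw [show α - 2 + 1 = α - 1 by ring]
      have htt : t * t ^ (α - 1) = t ^ α := by
        conv_rhs => rw [show α = 1 + (α - 1) by ring]
        rw [Real.rpow_add ht, Real.rpow_one]
      rw [← htt]
      have h1 : α - 1 ≠ 0 := by linarith
      have h2 : (1:ℝ) - α ≠ 0 := by linarith
      field_simp
      ring
    rw [e1, e2]
    have hα1' : 1 - α ≠ 0 := by linarith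
    field_simp

lemma myaux_maxsum {k : ℕ} {u v : Fin k → ℝ} (hmaj : Majorizes u v) (s : ℝ) :
    ∑ i, max (v i - s) 0 ≤ ∑ i, max (u i - s) 0 := by
  classical
  set A : Finset (Fin k) := Finset.univ.filter (fun i => s < v i) with hA
  obtain ⟨t, hcard, hle⟩ := hmaj.2 A
  have h1 : ∑ i, max (v i - s) 0 = ∑ i ∈ A, (v i - s) := by
    rw [← Finset.sum_subset (Finset.subset_univ A) (fun i _ hi => ?_)]
    · exact Finset.sum_congr rfl fun i hi => max_eq_left
        (sub_nonneg.mpr (le_of_lt (Finset.mem_filter.mp hi).2))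
    · have : ¬ s < v i := fun h => hi (Finset.mem_filter.mpr ⟨Finset.mem_univ i, h⟩)
      exact max_eq_right (sub_nonpos.mpr (not_lt.mp this))
  have h2 : ∑ i ∈ A, (v i - s) ≤ ∑ i ∈ t, (u i - s) := by
    rw [Finset.sum_sub_distrib, Finset.sum_sub_distrib, Finset.sum_const, Finset.sum_const, hcard]
    exact sub_le_sub_right hle _
  have h3 : ∑ i ∈ t, (u i - s) ≤ ∑ i ∈ t, max (u i - s) 0 :=
    Finset.sum_le_sum fun i _ => le_max_left _ _
  have h4 : ∑ i ∈ t, max (u i - s) 0 ≤ ∑ i, max (u i - s) 0 :=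
    Finset.sum_le_sum_of_subset_of_nonneg (Finset.subset_univ t)
      (fun i _ _ => le_max_right _ _)
  linarith

lemma myaux_sum_min {k : ℕ} {u v : Fin k → ℝ} (hmaj : Majorizes u v) (s : ℝ) :
    ∑ i, min (u i) s ≤ ∑ i, min (v i) s := by
  have key : ∀ w : Fin k → ℝ, ∑ i, min (w i) s = ∑ i, w i - ∑ i, max (w i - s) 0 := by
    intro w
    rw [← Finset.sum_sub_distrib]
    refine Finset.sum_congr rfl fun i _ => ?_
    rcases le_total (w i) s with h | h
    · rw [min_eq_left h, max_eq_right (sub_nonpos.mpr h), sub_zero]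
    · rw [min_eq_right h, max_eq_left (sub_nonneg.mpr h)]; ring
  rw [key u, key v, hmaj.1]
  exact sub_le_sub_left (myaux_maxsum hmaj s) _

lemma myaux_karamata {k : ℕ} {u v : Fin k → ℝ} (hu : ∀ i, 0 ≤ u i) (hv : ∀ i, 0 ≤ v i)
    (hmaj : Majorizes u v) {α : ℝ} (hα0 : 0 < α) (hα1 : α ≤ 1) :
    ∑ i, u i ^ α ≤ ∑ i, v i ^ α := by
  rcases eq_or_lt_of_le hα1 with rfl | hα1
  · simp only [Real.rpow_one]; exact hmaj.1.le
  · have hc : 0 < 1/α + 1/(1-α) := by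
      have : 0 < 1 - α := by linarith
      positivity
    have key : ∀ w : Fin k → ℝ, (∀ i, 0 ≤ w i) →
        (1/α + 1/(1-α)) * ∑ i, w i ^ α
          = ∫ s in Ioi (0:ℝ), ∑ i, min (w i) s * s ^ (α - 2) := by
      intro w hw
      rw [integral_finset_sum _ (fun i _ => myaux_min_integrableOn hα0 hα1 (hw i))]
      rw [Finset.mul_sum]
      exact Finset.sum_congr rfl fun i _ => (myaux_min_integral hα0 hα1 (hw i)).symm
    have hmono : (∫ s in Ioi (0:ℝ), ∑ i, min (u i) s * s ^ (α - 2))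
        ≤ ∫ s in Ioi (0:ℝ), ∑ i, min (v i) s * s ^ (α - 2) := by
      apply setIntegral_mono_on
      · exact integrable_finset_sum _ (fun i _ => myaux_min_integrableOn hα0 hα1 (hu i))
      · exact integrable_finset_sum _ (fun i _ => myaux_min_integrableOn hα0 hα1 (hv i))
      · exact measurableSet_Ioi
      · intro s hs
        rw [← Finset.sum_mul, ← Finset.sum_mul]
        exact mul_le_mul_of_nonneg_right (myaux_sum_min hmaj s)
          (Real.rpow_nonneg (le_of_lt hs) _)
    have hfin : (1/α + 1/(1-α)) * ∑ i, u i ^ α ≤ (1/α + 1/(1-α)) * ∑ i, v i ^ α := by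
      rw [key u hu, key v hv]; exact hmono
    exact le_of_mul_le_mul_left hfin hc

lemma myaux_fmono {p a : ℝ} (hp1 : 1 ≤ p) (ha : 0 ≤ a) :
    ∀ X Y : ℝ, 0 ≤ X → X ≤ Y → X ^ p - |X - a| ^ p ≤ Y ^ p - |Y - a| ^ p := by
  have step1 : ∀ X Y : ℝ, 0 ≤ X → X ≤ Y → Y ≤ a →
      X ^ p - |X - a| ^ p ≤ Y ^ p - |Y - a| ^ p := by
    intro X Y hX hXY hYa
    rw [abs_of_nonpos (by linarith), abs_of_nonpos (by linarith), neg_sub, neg_sub]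
    have h1 : X ^ p ≤ Y ^ p := Real.rpow_le_rpow hX hXY (by linarith)
    have h2 : (a - Y) ^ p ≤ (a - X) ^ p :=
      Real.rpow_le_rpow (by linarith) (by linarith) (by linarith)
    linarith
  have step2 : ∀ X Y : ℝ, a ≤ X → X ≤ Y →
      X ^ p - |X - a| ^ p ≤ Y ^ p - |Y - a| ^ p := by
    intro X Y hX hXY
    have hmono : MonotoneOn (fun t : ℝ => t ^ p - (t - a) ^ p) (Ici a) := by
      have hdiff : Differentiable ℝ (fun t : ℝ => t ^ p - (t - a) ^ p) := by
        apply Differentiable.sub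
        · exact Real.differentiable_rpow_const hp1
        · exact (Real.differentiable_rpow_const hp1).comp (differentiable_id.sub_const a)
      apply monotoneOn_of_deriv_nonneg (convex_Ici a) hdiff.continuous.continuousOn
        hdiff.differentiableOn
      intro x hx
      rw [interior_Ici] at hx
      have hax : a < x := hx
      have h1 : HasDerivAt (fun t : ℝ => t ^ p) (p * x ^ (p-1)) x :=
        Real.hasDerivAt_rpow_const (Or.inr hp1)
      have h2 : HasDerivAt (fun t : ℝ => (t - a) ^ p) (p * (x - a) ^ (p-1) * 1) x :=
        HasDerivAt.comp x (Real.hasDerivAt_rpow_const (Or.inr hp1))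
          ((hasDerivAt_id x).sub_const a)
      have hd : deriv (fun t : ℝ => t ^ p - (t - a) ^ p) x
          = p * x ^ (p-1) - p * (x - a) ^ (p-1) * 1 := (h1.sub h2).deriv
      rw [hd, mul_one]
      have hle : (x - a) ^ (p-1) ≤ x ^ (p-1) :=
        Real.rpow_le_rpow (by linarith) (by linarith) (by linarith)
      have hp0 : (0:ℝ) ≤ p := by linarith
      nlinarith
    have h := hmono (mem_Ici.mpr hX) (mem_Ici.mpr (hX.trans hXY)) hXY
    simp only at h
    rwa [abs_of_nonneg (by linarith : (0:ℝ) ≤ X - a),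
      abs_of_nonneg (by linarith : (0:ℝ) ≤ Y - a)]
  intro X Y hX hXY
  rcases le_total Y a with hYa | haY
  · exact step1 X Y hX hXY hYa
  · rcases le_total a X with haX | hXa
    · exact step2 X Y haX hXY
    · exact (step1 X a hX hXa le_rfl).trans (step2 a Y le_rfl haY)

lemma myaux_sq_rpow (p : ℝ) (z : ℝ) : ((z ^ 2 : ℝ)) ^ (p / 2) = |z| ^ p := by
  rw [← sq_abs z, ← Real.rpow_natCast |z| 2, ← Real.rpow_mul (abs_nonneg z)]
  norm_num
  rw [show (2:ℝ) * (p/2) = p by ring]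

lemma myaux_pMean {k : ℕ} {p : ℝ} (hp : 0 < p) (z : Fin k → ℝ) :
    pMean (p : EReal) z = ((k : ℝ)⁻¹ * ∑ j, |z j| ^ p) ^ p⁻¹ := by
  have h1 : (p : EReal) ≠ ⊤ := EReal.coe_ne_top p
  have h2 : (p : EReal) ≠ ⊥ := EReal.coe_ne_bot p
  have h3 : (p : EReal) ≠ 0 := by exact_mod_cast hp.ne'
  have h4 : ¬((p : EReal).toReal < 0 ∧ ∃ j, z j = 0) := by
    rw [EReal.toReal_coe]; rintro ⟨h, -⟩; linarith
  simp only [pMean, if_neg h1, if_neg h2, if_neg h3, if_neg h4, EReal.toReal_coe]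
  exact if_neg (by rintro ⟨h, -⟩; linarith : ¬(p < 0 ∧ ∃ j, z j = 0))

end MyAux

/-- For `p ∈ [1,2]`, `a ≥ 0`, `ε ≥ 0`, the set
`Č = {x : ∃ j, ∃ s ∈ {-1,1}, ⟨x - a s e_j⟩_p ≤ ε}` is a Schur²-concave set. -/
theorem checkB_schur2ConcaveSet (k : ℕ) (hk : 1 ≤ k) (p : ℝ) (hp1 : 1 ≤ p) (hp2 : p ≤ 2)
    (a : ℝ) (ha : 0 ≤ a) (ε : ℝ) (hε : 0 ≤ ε) :
    Schur2ConcaveSet {x : Fin k → ℝ |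
      ∃ (j : Fin k) (s : ℝ), (s = 1 ∨ s = -1) ∧
        pMean (p : EReal) (fun i => x i - a * s * (if i = j then 1 else 0)) ≤ ε} := by
  intro x y hx hmaj
  obtain ⟨j, s, hs, hxp⟩ := hx
  have hp0 : 0 < p := by linarith
  haveI : Nonempty (Fin k) := Fin.pos_iff_nonempty.mp hk
  obtain ⟨m, hm⟩ := Finite.exists_max (fun i => |y i|)
  set s' : ℝ := if 0 ≤ y m then 1 else -1 with hs'def
  have hs'1 : s' = 1 ∨ s' = -1 := by by_cases h : 0 ≤ y m <;> simp [hs'def, h]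
  refine ⟨m, s', hs'1, ?_⟩
  rw [myaux_pMean hp0] at hxp ⊢
  set Sx := ∑ i, |x i - a * s * (if i = j then 1 else 0)| ^ p with hSxdef
  set Sy := ∑ i, |y i - a * s' * (if i = m then 1 else 0)| ^ p with hSydef
  have decomp : ∀ (z : Fin k → ℝ) (c : ℝ) (i0 : Fin k),
      ∑ i, |z i - c * (if i = i0 then 1 else 0)| ^ p
        = (∑ i, |z i| ^ p) - |z i0| ^ p + |z i0 - c| ^ p := by
    intro z c i0
    have e1 : ∑ i ∈ Finset.univ.erase i0, |z i - c * (if i = i0 then 1 else 0)| ^ p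
        = ∑ i ∈ Finset.univ.erase i0, |z i| ^ p :=
      Finset.sum_congr rfl fun i hi => by
        rw [if_neg (Finset.ne_of_mem_erase hi), mul_zero, sub_zero]
    rw [← Finset.sum_erase_add _ _ (Finset.mem_univ i0), e1, if_pos rfl, mul_one,
      ← Finset.sum_erase_add _ (fun i => |z i| ^ p) (Finset.mem_univ i0)]
    ring
  have hK : ∑ i, |y i| ^ p ≤ ∑ i, |x i| ^ p := by
    have h := myaux_karamata (u := sqv y) (v := sqv x)
      (fun i => sq_nonneg _) (fun i => sq_nonneg _) hmaj
      (α := p/2) (by linarith) (by linarith)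
    simpa only [sqv, myaux_sq_rpow] using h
  have hXY : |x j| ≤ |y m| := by
    obtain ⟨t, hcard, hle⟩ := hmaj.2 {j}
    rw [Finset.card_singleton] at hcard
    obtain ⟨i0, rfl⟩ := Finset.card_eq_one.mp hcard
    rw [Finset.sum_singleton, Finset.sum_singleton] at hle
    simp only [sqv] at hle
    have h2 : (y i0)^2 ≤ (y m)^2 := by
      rw [← sq_abs (y i0), ← sq_abs (y m)]
      exact pow_le_pow_left₀ (abs_nonneg _) (hm i0) 2
    have h3 : (x j)^2 ≤ (y m)^2 := le_trans hle h2
    have h4 := Real.sqrt_le_sqrt h3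
    rwa [Real.sqrt_sq_eq_abs, Real.sqrt_sq_eq_abs] at h4
  have hF : |x j| ^ p - (abs (|x j| - a)) ^ p ≤ |y m| ^ p - (abs (|y m| - a)) ^ p :=
    myaux_fmono hp1 ha _ _ (abs_nonneg _) hXY
  have hym : |y m - a * s'| = (abs (|y m| - a)) := by
    by_cases h : 0 ≤ y m
    · have hh : s' = 1 := by rw [hs'def, if_pos h]
      rw [hh, mul_one, abs_of_nonneg h]
    · have hh : s' = -1 := by rw [hs'def, if_neg h]
      rw [hh, abs_of_neg (not_le.mp h),
        show y m - a * (-1) = y m + a by ring,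
        show -y m - a = -(y m + a) by ring, abs_neg]
  have hxj : (abs (|x j| - a)) ≤ |x j - a * s| := by
    have h1 := abs_abs_sub_abs_le_abs_sub (x j) (a * s)
    have h2 : |a * s| = a := by
      rcases hs with rfl | rfl <;> rw [abs_mul] <;> simp [abs_of_nonneg ha]
    rwa [h2] at h1
  have hSy_eq : Sy = (∑ i, |y i| ^ p) - |y m| ^ p + (abs (|y m| - a)) ^ p := by
    rw [hSydef, decomp, hym]
  have hSx_eq : Sx = (∑ i, |x i| ^ p) - |x j| ^ p + |x j - a * s| ^ p := by
    rw [hSxdef, decomp]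
  have hxj' : (abs (|x j| - a)) ^ p ≤ |x j - a * s| ^ p :=
    Real.rpow_le_rpow (abs_nonneg _) hxj hp0.le
  have hSy_le : Sy ≤ Sx := by rw [hSy_eq, hSx_eq]; linarith
  have hkpos : (0:ℝ) < (k:ℝ)⁻¹ := by
    have : (0:ℝ) < (k:ℝ) := by exact_mod_cast hk
    positivity
  have hSxnn : 0 ≤ Sx := by
    rw [hSxdef]
    exact Finset.sum_nonneg fun i _ => Real.rpow_nonneg (abs_nonneg _) _
  have hSynn : 0 ≤ Sy := by
    rw [hSydef]
    exact Finset.sum_nonneg fun i _ => Real.rpow_nonneg (abs_nonneg _) _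
  have hSx0 : 0 ≤ (k:ℝ)⁻¹ * Sx := mul_nonneg hkpos.le hSxnn
  have hSy0 : 0 ≤ (k:ℝ)⁻¹ * Sy := mul_nonneg hkpos.le hSynn
  have step : ((k:ℝ)⁻¹ * Sy) ^ p⁻¹ ≤ ((k:ℝ)⁻¹ * Sx) ^ p⁻¹ :=
    Real.rpow_le_rpow hSy0 (mul_le_mul_of_nonneg_left hSy_le hkpos.le) (by positivity)
  have h1 := Real.rpow_le_rpow (Real.rpow_nonneg hSx0 _) hxp hp0.le
  rw [Real.rpow_inv_rpow hSx0 hp0.ne'] at h1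
  have h2 : ((k:ℝ)⁻¹ * Sx) ^ p⁻¹ ≤ (ε ^ p) ^ p⁻¹ :=
    Real.rpow_le_rpow hSx0 h1 (by positivity)
  rw [Real.rpow_rpow_inv hε hp0.ne'] at h2
  exact step.trans h2
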